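/- Let G be a simple graph on a finite vertex set and let NM(G) = A·L be its neighbourhood matrix. Then for every pair of adjacent vertices i and j, NM(G)[i,j] = |N(j) \ N(i)|, the number of neighbours of j that are not neighbours of i. -/

import Mathlib

open SimpleGraph Matrix Finset

theorem nm_adj_entry {V : Type*} [Fintype V] [DecidableEq V] (G : SimpleGraph V)
    [DecidableRel G.Adj] (i j : V) (hij : G.Adj i j) :
    (G.adjMatrix ℤ * G.lapMatrix ℤ) i j =
      ((G.neighborFinset j \ G.neighborFinset i).card : ℤ) := by
  have key : (G.neighborFinset j \ G.neighborFinset i).card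
      + (G.neighborFinset j ∩ G.neighborFinset i).card = G.degree j :=
    card_sdiff_add_card_inter _ _
  have h1 : (G.adjMatrix ℤ * G.lapMatrix ℤ) i j
      = ∑ k ∈ G.neighborFinset i, G.lapMatrix ℤ k j := by
    simp [adjMatrix_mul_apply]
  rw [h1]
  simp only [lapMatrix, Matrix.sub_apply, degMatrix, Matrix.diagonal_apply, adjMatrix_apply,
    Finset.sum_sub_distrib]
  have h2 : ∑ k ∈ G.neighborFinset i, (if k = j then (G.degree k : ℤ) else 0)
      = G.degree j := by
    rw [Finset.sum_ite_eq' (G.neighborFinset i) j]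
    simp [hij]
  have h3 : ∑ k ∈ G.neighborFinset i, (if G.Adj k j then (1:ℤ) else 0)
      = ((G.neighborFinset i ∩ G.neighborFinset j).card : ℤ) := by
    rw [Finset.sum_boole]
    congr 1
    congr 1
    ext k
    simp [adj_comm]
  rw [h2, h3]
  have : (G.neighborFinset i ∩ G.neighborFinset j).card
      = (G.neighborFinset j ∩ G.neighborFinset i).card := by rw [Finset.inter_comm]
  rw [this]
  omega
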